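/- arXiv:2004.09266 — 3 statements merged into one kernel-verified Lean document; each statement's English description precedes it below -/
import Mathlib

section
/- Let N ≥ 1. Then the average over commutators in the unitary group satisfies ⟨Tr(C)⟩ = 1/N. -/
open MeasureTheory Matrix

noncomputable instance (N : ℕ) : MeasurableSpace (Matrix (Fin N) (Fin N) ℂ) := borel _
instance (N : ℕ) : BorelSpace (Matrix (Fin N) (Fin N) ℂ) := ⟨rfl⟩

namespace CUaux

instance (N : ℕ) : BorelSpace (Matrix.unitaryGroup (Fin N) ℂ) :=
  ⟨by borelize (Matrix (Fin N) (Fin N) ℂ); symm; apply borel_comap⟩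

lemma isClosed_ug (N : ℕ) :
    IsClosed (Matrix.unitaryGroup (Fin N) ℂ : Set (Matrix (Fin N) (Fin N) ℂ)) := by
  have h1 : Continuous fun M : Matrix (Fin N) (Fin N) ℂ => M * star M :=
    continuous_id.matrix_mul continuous_id.matrix_conjTranspose
  have h2 : (Matrix.unitaryGroup (Fin N) ℂ : Set (Matrix (Fin N) (Fin N) ℂ)) =
      (fun M : Matrix (Fin N) (Fin N) ℂ => M * star M) ⁻¹' {1} := by
    ext M
    simp [SetLike.mem_coe, Matrix.mem_unitaryGroup_iff]
  rw [h2]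
  exact isClosed_singleton.preimage h1

instance (N : ℕ) : CompactSpace (Matrix.unitaryGroup (Fin N) ℂ) := by
  have hS : IsCompact (Set.univ.pi fun _ : Fin N =>
      Set.univ.pi fun _ : Fin N => Metric.closedBall (0:ℂ) 1) :=
    isCompact_univ_pi fun _ => isCompact_univ_pi fun _ => isCompact_closedBall (0 : ℂ) 1
  have hsub : (Matrix.unitaryGroup (Fin N) ℂ : Set (Matrix (Fin N) (Fin N) ℂ)) ⊆
      (Set.univ.pi fun _ : Fin N => Set.univ.pi fun _ : Fin N => Metric.closedBall (0:ℂ) 1) := by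
    intro M hM
    refine Set.mem_univ_pi.mpr ?_
    intro i
    rw [Set.mem_univ_pi]
    intro j
    rw [Metric.mem_closedBall, dist_zero_right]
    exact entry_norm_bound_of_unitary hM i j
  have : IsCompact (Matrix.unitaryGroup (Fin N) ℂ : Set (Matrix (Fin N) (Fin N) ℂ)) :=
    hS.of_isClosed_subset (isClosed_ug N) hsub
  exact isCompact_iff_compactSpace.mp this

variable {N : ℕ}

/-- Off-diagonal entries of a matrix commuting with all unitaries vanish. -/
lemma diag_matrix_of_commute (M : Matrix (Fin N) (Fin N) ℂ)
    (h : ∀ w : Matrix.unitaryGroup (Fin N) ℂ,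
      (w : Matrix (Fin N) (Fin N) ℂ) * M = M * (w : Matrix (Fin N) (Fin N) ℂ))
    {a b : Fin N} (hab : a ≠ b) : M a b = 0 := by
  set d : Fin N → ℂ := fun k => if k = a then -1 else 1 with hd
  have hmem : Matrix.diagonal d ∈ Matrix.unitaryGroup (Fin N) ℂ := by
    rw [Matrix.mem_unitaryGroup_iff]
    rw [Matrix.star_eq_conjTranspose, Matrix.diagonal_conjTranspose]
    rw [Matrix.diagonal_mul_diagonal]
    have : (fun k => d k * star (d k)) = fun _ => (1:ℂ) := by
      funext k
      simp only [hd]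
      split_ifs <;> simp
    rw [Pi.star_def] at *
    simp only [this, Matrix.diagonal_one]
  have hw := h ⟨Matrix.diagonal d, hmem⟩
  have this : d a * M a b = M a b * d b := by
    have hentry := congrFun (congrFun hw a) b
    rwa [Matrix.diagonal_mul, Matrix.mul_diagonal] at hentry
  have hda : d a = -1 := by simp [hd]
  have hdb : d b = 1 := by simp [hd, (Ne.symm hab)]
  rw [hda, hdb, mul_one] at this
  have : M a b + M a b = 0 := by linear_combination -this
  exact add_self_eq_zero.mp this

lemma diag_eq_of_commute (M : Matrix (Fin N) (Fin N) ℂ)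
    (h : ∀ w : Matrix.unitaryGroup (Fin N) ℂ,
      (w : Matrix (Fin N) (Fin N) ℂ) * M = M * (w : Matrix (Fin N) (Fin N) ℂ))
    (i j : Fin N) : M i i = M j j := by
  set σ := Equiv.swap i j with hσ
  set P : Matrix (Fin N) (Fin N) ℂ := σ.toPEquiv.toMatrix with hP
  have hPstar : star P = P := by
    rw [Matrix.star_eq_conjTranspose]
    ext x y
    rw [Matrix.conjTranspose_apply, hP, PEquiv.toMatrix_apply, PEquiv.toMatrix_apply]
    by_cases hxy : y ∈ σ.toPEquiv x
    · have : x ∈ σ.toPEquiv y := by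
        simp only [Equiv.toPEquiv_apply, Option.mem_def, Option.some.injEq] at hxy ⊢
        rw [← hxy]; simp [hσ, Equiv.swap_apply_self]
      simp only [Equiv.toPEquiv_apply, Option.mem_def, Option.some.injEq] at hxy this
      simp [hxy, this]
    · have : x ∉ σ.toPEquiv y := by
        intro hc
        apply hxy
        simp only [Equiv.toPEquiv_apply, Option.mem_def, Option.some.injEq] at hc ⊢
        rw [← hc]; simp [hσ, Equiv.swap_apply_self]
      simp only [Equiv.toPEquiv_apply, Option.mem_def, Option.some.injEq] at hxy this
      simp [hxy, this]
  have hmem : P ∈ Matrix.unitaryGroup (Fin N) ℂ := by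
    rw [Matrix.mem_unitaryGroup_iff, hPstar, hP, ← PEquiv.toMatrix_trans,
      ← Equiv.toPEquiv_trans]
    have : σ.trans σ = Equiv.refl (Fin N) := by
      ext x; simp [hσ, Equiv.swap_apply_self]
    rw [this, Equiv.toPEquiv_refl, PEquiv.toMatrix_refl]
  have hw := h ⟨P, hmem⟩
  rw [show ((⟨P, hmem⟩ : Matrix.unitaryGroup (Fin N) ℂ) :
      Matrix (Fin N) (Fin N) ℂ) = P from rfl] at hw
  rw [hP, PEquiv.toMatrix_toPEquiv_mul, PEquiv.mul_toMatrix_toPEquiv] at hw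
  rw [Matrix.ext_iff.symm] at hw
  have := hw i j
  simp only [Matrix.submatrix_apply, id_eq] at this
  rw [show σ i = j from Equiv.swap_apply_left i j] at this
  rw [show σ.symm j = i by rw [Equiv.symm_swap]; exact Equiv.swap_apply_right i j] at this
  exact this.symm

lemma scalar_of_commute (hN : 1 ≤ N) (M : Matrix (Fin N) (Fin N) ℂ)
    (h : ∀ w : Matrix.unitaryGroup (Fin N) ℂ,
      (w : Matrix (Fin N) (Fin N) ℂ) * M = M * (w : Matrix (Fin N) (Fin N) ℂ))
    (a b : Fin N) : M a b = if a = b then M.trace / N else 0 := by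
  split_ifs with hab
  · subst hab
    have htr : M.trace = (N : ℂ) * M a a := by
      rw [Matrix.trace]
      have : ∀ k : Fin N, M.diag k = M a a := fun k => diag_eq_of_commute M h k a
      rw [Finset.sum_congr rfl fun k _ => this k]
      simp [Finset.card_univ, mul_comm]
    have hNne : (N : ℂ) ≠ 0 := by
      exact_mod_cast Nat.cast_ne_zero.mpr (by omega)
    rw [htr]
    field_simp
  · exact diag_matrix_of_commute M h hab

lemma contU (i j : Fin N) :
    Continuous fun u : Matrix.unitaryGroup (Fin N) ℂ => (u : Matrix (Fin N) (Fin N) ℂ) i j :=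
  continuous_subtype_val.matrix_elem i j

lemma contUinv (i j : Fin N) :
    Continuous fun u : Matrix.unitaryGroup (Fin N) ℂ =>
      ((u⁻¹ : Matrix.unitaryGroup (Fin N) ℂ) : Matrix (Fin N) (Fin N) ℂ) i j := by
  have h : ∀ u : Matrix.unitaryGroup (Fin N) ℂ,
      ((u⁻¹ : Matrix.unitaryGroup (Fin N) ℂ) : Matrix (Fin N) (Fin N) ℂ) =
        star (u : Matrix (Fin N) (Fin N) ℂ) := fun u => rfl
  simp only [h]
  exact (continuous_subtype_val.matrix_conjTranspose).matrix_elem i j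

lemma integrable_cont (μ : Measure (Matrix.unitaryGroup (Fin N) ℂ)) [IsProbabilityMeasure μ]
    {f : Matrix.unitaryGroup (Fin N) ℂ → ℂ} (hf : Continuous f) : Integrable f μ :=
  hf.integrable_of_hasCompactSupport
    (IsCompact.of_isClosed_subset isCompact_univ (isClosed_tsupport f) (Set.subset_univ _))

variable (μ : Measure (Matrix.unitaryGroup (Fin N) ℂ))

noncomputable def K (c d : Fin N) : Matrix (Fin N) (Fin N) ℂ :=
  Matrix.of fun a b => ∫ u, (u : Matrix (Fin N) (Fin N) ℂ) a c *
    ((u⁻¹ : Matrix.unitaryGroup (Fin N) ℂ) : Matrix (Fin N) (Fin N) ℂ) d b ∂μ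

lemma intUUinv [IsProbabilityMeasure μ] (a c d b : Fin N) :
    Integrable (fun u : Matrix.unitaryGroup (Fin N) ℂ =>
      (u : Matrix (Fin N) (Fin N) ℂ) a c *
        ((u⁻¹ : Matrix.unitaryGroup (Fin N) ℂ) : Matrix (Fin N) (Fin N) ℂ) d b) μ :=
  integrable_cont μ ((contU a c).mul (contUinv d b))

variable [μ.IsHaarMeasure] [IsProbabilityMeasure μ]

lemma K_comm (c d : Fin N) (w : Matrix.unitaryGroup (Fin N) ℂ) :
    (w : Matrix (Fin N) (Fin N) ℂ) * K μ c d = K μ c d * (w : Matrix (Fin N) (Fin N) ℂ) := by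
  ext a b
  rw [Matrix.mul_apply, Matrix.mul_apply]
  have hL : ∀ x : Fin N, (w : Matrix (Fin N) (Fin N) ℂ) a x * K μ c d x b =
      ∫ u, (w : Matrix (Fin N) (Fin N) ℂ) a x * ((u : Matrix (Fin N) (Fin N) ℂ) x c *
        ((u⁻¹ : Matrix.unitaryGroup (Fin N) ℂ) : Matrix (Fin N) (Fin N) ℂ) d b) ∂μ := by
    intro x
    rw [integral_const_mul]
    rfl
  have hR : ∀ x : Fin N, K μ c d a x * (w : Matrix (Fin N) (Fin N) ℂ) x b =
      ∫ u, ((u : Matrix (Fin N) (Fin N) ℂ) a c *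
        ((u⁻¹ : Matrix.unitaryGroup (Fin N) ℂ) : Matrix (Fin N) (Fin N) ℂ) d x) *
        (w : Matrix (Fin N) (Fin N) ℂ) x b ∂μ := by
    intro x
    rw [integral_mul_const]
    rfl
  simp only [hL, hR]
  rw [← integral_finset_sum _ (fun x _ => ((intUUinv μ x c d b).const_mul _)),
      ← integral_finset_sum _ (fun x _ => ((intUUinv μ a c d x).mul_const _))]
  have hLfun : ∀ u : Matrix.unitaryGroup (Fin N) ℂ,
      (∑ x, (w : Matrix (Fin N) (Fin N) ℂ) a x * ((u : Matrix (Fin N) (Fin N) ℂ) x c *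
        ((u⁻¹ : Matrix.unitaryGroup (Fin N) ℂ) : Matrix (Fin N) (Fin N) ℂ) d b)) =
      ((w * u : Matrix.unitaryGroup (Fin N) ℂ) : Matrix (Fin N) (Fin N) ℂ) a c *
        ((u⁻¹ : Matrix.unitaryGroup (Fin N) ℂ) : Matrix (Fin N) (Fin N) ℂ) d b := by
    intro u
    rw [show ((w * u : Matrix.unitaryGroup (Fin N) ℂ) : Matrix (Fin N) (Fin N) ℂ) =
      (w : Matrix (Fin N) (Fin N) ℂ) * (u : Matrix (Fin N) (Fin N) ℂ) from rfl,
      Matrix.mul_apply, Finset.sum_mul]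
    exact Finset.sum_congr rfl fun x _ => by ring
  have hRfun : ∀ u : Matrix.unitaryGroup (Fin N) ℂ,
      (∑ x, ((u : Matrix (Fin N) (Fin N) ℂ) a c *
        ((u⁻¹ : Matrix.unitaryGroup (Fin N) ℂ) : Matrix (Fin N) (Fin N) ℂ) d x) *
        (w : Matrix (Fin N) (Fin N) ℂ) x b) =
      (u : Matrix (Fin N) (Fin N) ℂ) a c *
        (((u⁻¹ : Matrix.unitaryGroup (Fin N) ℂ) : Matrix (Fin N) (Fin N) ℂ) *
          (w : Matrix (Fin N) (Fin N) ℂ)) d b := by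
    intro u
    rw [Matrix.mul_apply, Finset.mul_sum]
    exact Finset.sum_congr rfl fun x _ => by ring
  simp only [hLfun, hRfun]
  have key := integral_mul_left_eq_self (μ := μ)
    (fun u : Matrix.unitaryGroup (Fin N) ℂ =>
      (u : Matrix (Fin N) (Fin N) ℂ) a c *
        (((u⁻¹ : Matrix.unitaryGroup (Fin N) ℂ) : Matrix (Fin N) (Fin N) ℂ) *
          (w : Matrix (Fin N) (Fin N) ℂ)) d b) w
  rw [← key]
  congr 1
  funext u
  have h1 : (((w * u)⁻¹ : Matrix.unitaryGroup (Fin N) ℂ) : Matrix (Fin N) (Fin N) ℂ) *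
      (w : Matrix (Fin N) (Fin N) ℂ) =
      ((u⁻¹ : Matrix.unitaryGroup (Fin N) ℂ) : Matrix (Fin N) (Fin N) ℂ) := by
    rw [_root_.mul_inv_rev]
    rw [show (((u⁻¹ * w⁻¹ : Matrix.unitaryGroup (Fin N) ℂ)) : Matrix (Fin N) (Fin N) ℂ) =
      ((u⁻¹ : Matrix.unitaryGroup (Fin N) ℂ) : Matrix (Fin N) (Fin N) ℂ) *
      ((w⁻¹ : Matrix.unitaryGroup (Fin N) ℂ) : Matrix (Fin N) (Fin N) ℂ) from rfl]
    rw [mul_assoc]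
    rw [show ((w⁻¹ : Matrix.unitaryGroup (Fin N) ℂ) : Matrix (Fin N) (Fin N) ℂ) *
      (w : Matrix (Fin N) (Fin N) ℂ) = ((w⁻¹ * w : Matrix.unitaryGroup (Fin N) ℂ) :
        Matrix (Fin N) (Fin N) ℂ) from rfl, inv_mul_cancel]
    simp
  rw [h1]

lemma K_trace (c d : Fin N) : (K μ c d).trace = if d = c then 1 else 0 := by
  rw [Matrix.trace]
  have hdiag : ∀ a : Fin N, (K μ c d).diag a = ∫ u, (u : Matrix (Fin N) (Fin N) ℂ) a c *
      ((u⁻¹ : Matrix.unitaryGroup (Fin N) ℂ) : Matrix (Fin N) (Fin N) ℂ) d a ∂μ :=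
    fun a => rfl
  simp only [hdiag]
  rw [← integral_finset_sum _ (fun a _ => intUUinv μ a c d a)]
  have hsum : ∀ u : Matrix.unitaryGroup (Fin N) ℂ,
      (∑ a, (u : Matrix (Fin N) (Fin N) ℂ) a c *
        ((u⁻¹ : Matrix.unitaryGroup (Fin N) ℂ) : Matrix (Fin N) (Fin N) ℂ) d a) =
      if d = c then 1 else 0 := by
    intro u
    have h1 : (((u⁻¹ : Matrix.unitaryGroup (Fin N) ℂ) : Matrix (Fin N) (Fin N) ℂ) *
        (u : Matrix (Fin N) (Fin N) ℂ)) d c = (1 : Matrix (Fin N) (Fin N) ℂ) d c := by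
      rw [show ((u⁻¹ : Matrix.unitaryGroup (Fin N) ℂ) : Matrix (Fin N) (Fin N) ℂ) *
        (u : Matrix (Fin N) (Fin N) ℂ) = ((u⁻¹ * u : Matrix.unitaryGroup (Fin N) ℂ) :
          Matrix (Fin N) (Fin N) ℂ) from rfl, inv_mul_cancel]
      rfl
    rw [Matrix.mul_apply] at h1
    rw [← Matrix.one_apply (i := d) (j := c), ← h1]
    exact Finset.sum_congr rfl fun x _ => by ring
  simp only [hsum]
  simp

lemma coeff (hN : 1 ≤ N) (a c d b : Fin N) :
    ∫ u, (u : Matrix (Fin N) (Fin N) ℂ) a c *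
      ((u⁻¹ : Matrix.unitaryGroup (Fin N) ℂ) : Matrix (Fin N) (Fin N) ℂ) d b ∂μ =
    (if c = d then 1 else 0) * (if a = b then 1 else 0) / N := by
  have h := scalar_of_commute hN (K μ c d) (K_comm μ c d) a b
  rw [K_trace] at h
  have hK : K μ c d a b = ∫ u, (u : Matrix (Fin N) (Fin N) ℂ) a c *
      ((u⁻¹ : Matrix.unitaryGroup (Fin N) ℂ) : Matrix (Fin N) (Fin N) ℂ) d b ∂μ := rfl
  rw [hK] at h
  rw [h]
  by_cases h1 : a = b <;> by_cases h2 : c = d <;>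
    simp [h1, h2, eq_comm, div_eq_mul_inv]

lemma trace4 (A B C D : Matrix (Fin N) (Fin N) ℂ) :
    (A * B * C * D).trace = ∑ a, ∑ b, ∑ d, ∑ c, (A a c * C d b) * (B c d * D b a) := by
  simp only [Matrix.trace, Matrix.diag, Matrix.mul_apply, Finset.sum_mul]
  refine Finset.sum_congr rfl fun a _ => ?_
  refine Finset.sum_congr rfl fun b _ => ?_
  refine Finset.sum_congr rfl fun d _ => ?_
  refine Finset.sum_congr rfl fun c _ => ?_
  ring

end CUaux

/-- ⟨Tr C⟩ over CU(N) equals 1/N. -/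
theorem trace_avg_CU (N : ℕ) (hN : 1 ≤ N)
    (μ : Measure (Matrix.unitaryGroup (Fin N) ℂ))
    [μ.IsHaarMeasure] [IsProbabilityMeasure μ] :
    ∫ u, ∫ v, (((u * v * u⁻¹ * v⁻¹ : Matrix.unitaryGroup (Fin N) ℂ) :
        Matrix (Fin N) (Fin N) ℂ)).trace ∂μ ∂μ
      = 1 / (N : ℂ) := by
  classical
  have hNne : (N : ℂ) ≠ 0 := by
    exact_mod_cast Nat.cast_ne_zero.mpr (by omega)
  have hinner : ∀ u : Matrix.unitaryGroup (Fin N) ℂ,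
      (∫ v, (((u * v * u⁻¹ * v⁻¹ : Matrix.unitaryGroup (Fin N) ℂ) :
        Matrix (Fin N) (Fin N) ℂ)).trace ∂μ) =
      ∑ a, ∑ b, ((u : Matrix (Fin N) (Fin N) ℂ) a a *
        ((u⁻¹ : Matrix.unitaryGroup (Fin N) ℂ) : Matrix (Fin N) (Fin N) ℂ) b b) / N := by
    intro u
    have hconv : ∀ v : Matrix.unitaryGroup (Fin N) ℂ,
        (((u * v * u⁻¹ * v⁻¹ : Matrix.unitaryGroup (Fin N) ℂ) :
          Matrix (Fin N) (Fin N) ℂ)).trace =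
        ∑ a, ∑ b, ∑ d, ∑ c,
          ((u : Matrix (Fin N) (Fin N) ℂ) a c *
            ((u⁻¹ : Matrix.unitaryGroup (Fin N) ℂ) : Matrix (Fin N) (Fin N) ℂ) d b) *
          ((v : Matrix (Fin N) (Fin N) ℂ) c d *
            ((v⁻¹ : Matrix.unitaryGroup (Fin N) ℂ) : Matrix (Fin N) (Fin N) ℂ) b a) := by
      intro v
      rw [show ((u * v * u⁻¹ * v⁻¹ : Matrix.unitaryGroup (Fin N) ℂ) :
        Matrix (Fin N) (Fin N) ℂ) =
        (u : Matrix (Fin N) (Fin N) ℂ) * (v : Matrix (Fin N) (Fin N) ℂ) *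
        ((u⁻¹ : Matrix.unitaryGroup (Fin N) ℂ) : Matrix (Fin N) (Fin N) ℂ) *
        ((v⁻¹ : Matrix.unitaryGroup (Fin N) ℂ) : Matrix (Fin N) (Fin N) ℂ) from rfl]
      exact CUaux.trace4 _ _ _ _
    simp only [hconv]
    rw [integral_finset_sum _ (fun a _ => integrable_finset_sum _
      (fun b _ => integrable_finset_sum _ (fun d _ => integrable_finset_sum _
        (fun c _ => (CUaux.intUUinv μ c d b a).const_mul _))))]
    refine Finset.sum_congr rfl fun a _ => ?_
    rw [integral_finset_sum _ (fun b _ => integrable_finset_sum _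
      (fun d _ => integrable_finset_sum _ (fun c _ => (CUaux.intUUinv μ c d b a).const_mul _)))]
    refine Finset.sum_congr rfl fun b _ => ?_
    rw [integral_finset_sum _ (fun d _ => integrable_finset_sum _
      (fun c _ => (CUaux.intUUinv μ c d b a).const_mul _))]
    have hterm : ∀ d : Fin N, (∫ v, ∑ c,
        ((u : Matrix (Fin N) (Fin N) ℂ) a c *
          ((u⁻¹ : Matrix.unitaryGroup (Fin N) ℂ) : Matrix (Fin N) (Fin N) ℂ) d b) *
        ((v : Matrix (Fin N) (Fin N) ℂ) c d *
          ((v⁻¹ : Matrix.unitaryGroup (Fin N) ℂ) : Matrix (Fin N) (Fin N) ℂ) b a) ∂μ) =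
        ∑ c, ((u : Matrix (Fin N) (Fin N) ℂ) a c *
          ((u⁻¹ : Matrix.unitaryGroup (Fin N) ℂ) : Matrix (Fin N) (Fin N) ℂ) d b) *
          ((if d = b then 1 else 0) * (if c = a then 1 else 0) / N) := by
      intro d
      rw [integral_finset_sum _ (fun c _ => (CUaux.intUUinv μ c d b a).const_mul _)]
      refine Finset.sum_congr rfl fun c _ => ?_
      rw [integral_const_mul, CUaux.coeff μ hN c d b a]
    simp only [hterm]
    have hd : ∀ d c : Fin N, ((u : Matrix (Fin N) (Fin N) ℂ) a c *
        ((u⁻¹ : Matrix.unitaryGroup (Fin N) ℂ) : Matrix (Fin N) (Fin N) ℂ) d b) *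
        ((if d = b then 1 else 0) * (if c = a then 1 else 0) / N) =
        if c = a then (if d = b then ((u : Matrix (Fin N) (Fin N) ℂ) a c *
          ((u⁻¹ : Matrix.unitaryGroup (Fin N) ℂ) : Matrix (Fin N) (Fin N) ℂ) d b) / N
          else 0) else 0 := by
      intro d c
      split_ifs <;> ring
    simp only [hd, Finset.sum_ite_eq', Finset.mem_univ, if_true]
  rw [integral_congr_ae (Filter.Eventually.of_forall hinner)]
  rw [integral_finset_sum _ (fun a _ => integrable_finset_sum _
    (fun b _ => (CUaux.intUUinv μ a a b b).div_const _))]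
  have houter : ∀ a : Fin N, (∫ u, ∑ b, ((u : Matrix (Fin N) (Fin N) ℂ) a a *
      ((u⁻¹ : Matrix.unitaryGroup (Fin N) ℂ) : Matrix (Fin N) (Fin N) ℂ) b b) / N ∂μ) =
      (1 : ℂ) / N / N := by
    intro a
    rw [integral_finset_sum _ (fun b _ => (CUaux.intUUinv μ a a b b).div_const _)]
    have hb : ∀ b : Fin N, (∫ u, ((u : Matrix (Fin N) (Fin N) ℂ) a a *
        ((u⁻¹ : Matrix.unitaryGroup (Fin N) ℂ) : Matrix (Fin N) (Fin N) ℂ) b b) / N ∂μ) =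
        if b = a then (1 : ℂ) / N / N else 0 := by
      intro b
      rw [integral_div, CUaux.coeff μ hN a a b b]
      by_cases hab : a = b
      · subst hab; simp
      · simp [hab, Ne.symm hab]
    simp only [hb, Finset.sum_ite_eq', Finset.mem_univ, if_true]
  simp only [houter]
  rw [Finset.sum_const, Finset.card_univ, Fintype.card_fin]
  rw [nsmul_eq_mul]
  field_simp
end

section
/- Let N ≥ 1. Then the average over commutators in the orthogonal group satisfies ⟨Tr(C)⟩ = 1/N. -/
open MeasureTheory Matrix
noncomputable instance (N : ℕ) : MeasurableSpace (Matrix (Fin N) (Fin N) ℝ) := borel _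
instance (N : ℕ) : BorelSpace (Matrix (Fin N) (Fin N) ℝ) := ⟨rfl⟩
instance (N : ℕ) : SecondCountableTopology (Matrix (Fin N) (Fin N) ℝ) :=
  inferInstanceAs (SecondCountableTopology ((Fin N) → (Fin N) → ℝ))
instance (N : ℕ) : SecondCountableTopology (Matrix.orthogonalGroup (Fin N) ℝ) :=
  inferInstanceAs (SecondCountableTopology (((Matrix.orthogonalGroup (Fin N) ℝ) : Set (Matrix (Fin N) (Fin N) ℝ))))
instance (N : ℕ) : BorelSpace (Matrix.orthogonalGroup (Fin N) ℝ) :=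
  inferInstanceAs (BorelSpace (((Matrix.orthogonalGroup (Fin N) ℝ) : Set (Matrix (Fin N) (Fin N) ℝ))))
instance (N : ℕ) : IsTopologicalGroup (Matrix.orthogonalGroup (Fin N) ℝ) where
  continuous_mul := continuous_mul
  continuous_inv := by
    rw [continuous_induced_rng]
    exact continuous_star.comp continuous_subtype_val

section haarinv

variable {G : Type*} [Group G] [TopologicalSpace G] [IsTopologicalGroup G]
  [MeasurableSpace G] [BorelSpace G] [CompactSpace G]

lemma haar_smul_aux (μ ν : Measure G) [IsProbabilityMeasure μ] [IsProbabilityMeasure ν]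
    (c : NNReal) (h : ν = c • μ) : ν = μ := by
  have hu := congrArg (fun m : Measure G => m Set.univ) h
  simp only [Measure.smul_apply, measure_univ] at hu
  have hc : (c : ENNReal) = 1 := by simpa [ENNReal.smul_def] using hu.symm
  have hc' : c = 1 := by exact_mod_cast hc
  rw [h, hc', one_smul]

lemma haar_map_mul_right (μ : Measure G) [μ.IsHaarMeasure] [IsProbabilityMeasure μ] (g : G) :
    Measure.map (· * g) μ = μ := by
  haveI : IsProbabilityMeasure (Measure.map (· * g) μ) :=
    Measure.isProbabilityMeasure_map (measurable_mul_const g).aemeasurable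
  exact haar_smul_aux μ _ _ (Measure.isMulInvariant_eq_smul_of_compactSpace (Measure.map (· * g) μ) μ)

instance haar_right_inv (μ : Measure G) [μ.IsHaarMeasure] [IsProbabilityMeasure μ] :
    μ.IsMulRightInvariant := ⟨fun g => haar_map_mul_right μ g⟩

lemma haar_inv_inv (μ : Measure G) [μ.IsHaarMeasure] [IsProbabilityMeasure μ] :
    μ.IsInvInvariant := by
  constructor
  haveI : μ.IsMulRightInvariant := haar_right_inv μ
  haveI : (μ.inv).IsMulLeftInvariant := by infer_instance
  haveI : IsProbabilityMeasure μ.inv := by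
    rw [Measure.inv_def]
    exact Measure.isProbabilityMeasure_map measurable_inv.aemeasurable
  exact haar_smul_aux μ _ _ (Measure.isMulInvariant_eq_smul_of_compactSpace μ.inv μ)

end haarinv

variable {N : ℕ}

instance (N : ℕ) : CompactSpace (Matrix.orthogonalGroup (Fin N) ℝ) := by
  have hsub : ((Matrix.orthogonalGroup (Fin N) ℝ) : Set (Matrix (Fin N) (Fin N) ℝ)) ⊆
      Set.pi Set.univ fun _ : Fin N => Set.pi Set.univ fun _ : Fin N => Set.Icc (-1:ℝ) 1 := by
    intro A hA i _ j _
    have := entry_norm_bound_of_unitary (𝕜 := ℝ) hA i j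
    rw [Real.norm_eq_abs] at this
    exact abs_le.mp this
  have hK : IsCompact (Set.pi Set.univ fun _ : Fin N => Set.pi Set.univ
      fun _ : Fin N => Set.Icc (-1:ℝ) 1) :=
    isCompact_univ_pi fun _ => isCompact_univ_pi fun _ => isCompact_Icc
  have hclosed : IsClosed ((Matrix.orthogonalGroup (Fin N) ℝ) : Set (Matrix (Fin N) (Fin N) ℝ)) := by
    have h : ((Matrix.orthogonalGroup (Fin N) ℝ) : Set (Matrix (Fin N) (Fin N) ℝ)) =
        (fun A : Matrix (Fin N) (Fin N) ℝ => A * star A) ⁻¹' {1} := by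
      ext A
      simp [Matrix.mem_orthogonalGroup_iff, Matrix.star_eq_conjTranspose]
    rw [h]
    exact IsClosed.preimage (continuous_id.mul continuous_star) isClosed_singleton
  exact isCompact_iff_compactSpace.mp (hK.of_isClosed_subset hclosed hsub)

lemma cont_entry (i j : Fin N) :
    Continuous fun u : Matrix.orthogonalGroup (Fin N) ℝ => (u : Matrix (Fin N) (Fin N) ℝ) i j :=
  (continuous_apply j).comp ((continuous_apply i).comp continuous_subtype_val)

-- sign-flip element
def sgn (i : Fin N) : Matrix.orthogonalGroup (Fin N) ℝ :=
  ⟨Matrix.diagonal (fun a => if a = i then (-1 : ℝ) else 1), by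
    rw [Matrix.mem_orthogonalGroup_iff]
    have hstar : star (Matrix.diagonal (fun a => if a = i then (-1 : ℝ) else 1))
        = Matrix.diagonal (fun a => if a = i then (-1 : ℝ) else 1) := by
      rw [Matrix.star_eq_conjTranspose, Matrix.diagonal_conjTranspose]
      simp
    rw [Matrix.diagonal_transpose, Matrix.diagonal_mul_diagonal]
    have h1 : (fun a => (if a = i then (-1:ℝ) else 1) * (if a = i then (-1:ℝ) else 1))
        = fun _ => (1:ℝ) := by funext a; by_cases h : a = i <;> simp [h]
    rw [h1, Matrix.diagonal_one]⟩

lemma sgn_mul (i : Fin N) (u : Matrix.orthogonalGroup (Fin N) ℝ) (a b : Fin N) :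
    ((sgn i * u : Matrix.orthogonalGroup (Fin N) ℝ) : Matrix (Fin N) (Fin N) ℝ) a b
      = (if a = i then (-1:ℝ) else 1) * (u : Matrix (Fin N) (Fin N) ℝ) a b := by
  rw [Matrix.UnitaryGroup.mul_val]
  exact Matrix.diagonal_mul _ _ _ _

-- permutation element
def permO (σ : Equiv.Perm (Fin N)) : Matrix.orthogonalGroup (Fin N) ℝ :=
  ⟨(σ.toPEquiv.toMatrix : Matrix (Fin N) (Fin N) ℝ), by
    rw [Matrix.mem_orthogonalGroup_iff]
    have hstar : star (σ.toPEquiv.toMatrix : Matrix (Fin N) (Fin N) ℝ)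
        = (σ.symm.toPEquiv.toMatrix : Matrix (Fin N) (Fin N) ℝ) := by
      rw [Matrix.star_eq_conjTranspose]
      have h2 : ((σ.toPEquiv.toMatrix : Matrix (Fin N) (Fin N) ℝ))ᴴ
          = ((σ.toPEquiv.toMatrix : Matrix (Fin N) (Fin N) ℝ))ᵀ := by
        ext a b; simp [Matrix.conjTranspose_apply]
      rw [h2, ← PEquiv.toMatrix_symm, ← Equiv.toPEquiv_symm]
    rw [← PEquiv.toMatrix_symm, ← Equiv.toPEquiv_symm, ← PEquiv.toMatrix_trans, ← Equiv.toPEquiv_trans]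
    simp⟩

lemma permO_mul (σ : Equiv.Perm (Fin N)) (u : Matrix.orthogonalGroup (Fin N) ℝ) (a b : Fin N) :
    ((permO σ * u : Matrix.orthogonalGroup (Fin N) ℝ) : Matrix (Fin N) (Fin N) ℝ) a b
      = (u : Matrix (Fin N) (Fin N) ℝ) (σ a) b := by
  rw [Matrix.UnitaryGroup.mul_val]
  show ((σ.toPEquiv.toMatrix : Matrix (Fin N) (Fin N) ℝ) * (u : Matrix (Fin N) (Fin N) ℝ)) a b = _
  rw [PEquiv.toMatrix_toPEquiv_mul]
  rfl

lemma inv_entry (u : Matrix.orthogonalGroup (Fin N) ℝ) (a b : Fin N) :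
    ((u⁻¹ : Matrix.orthogonalGroup (Fin N) ℝ) : Matrix (Fin N) (Fin N) ℝ) a b
      = (u : Matrix (Fin N) (Fin N) ℝ) b a := by
  rw [Matrix.UnitaryGroup.inv_val, Matrix.star_apply, star_trivial]

section moments

variable (μ : Measure (Matrix.orthogonalGroup (Fin N) ℝ)) [μ.IsHaarMeasure]
  [IsProbabilityMeasure μ]

lemma integrable_entry_mul (i j k l : Fin N) :
    Integrable (fun u : Matrix.orthogonalGroup (Fin N) ℝ =>
      (u : Matrix (Fin N) (Fin N) ℝ) i j * (u : Matrix (Fin N) (Fin N) ℝ) k l) μ :=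
  Continuous.integrable_of_hasCompactSupport ((cont_entry i j).mul (cont_entry k l))
    (HasCompactSupport.of_compactSpace _)

lemma moment_row_ne (i j k l : Fin N) (h : i ≠ k) :
    ∫ u, (u : Matrix (Fin N) (Fin N) ℝ) i j * (u : Matrix (Fin N) (Fin N) ℝ) k l ∂μ = 0 := by
  have key := MeasureTheory.integral_mul_left_eq_self
    (μ := μ) (fun u : Matrix.orthogonalGroup (Fin N) ℝ =>
      (u : Matrix (Fin N) (Fin N) ℝ) i j * (u : Matrix (Fin N) (Fin N) ℝ) k l) (sgn i)
  simp only [sgn_mul, eq_self_iff_true, if_true, if_neg (Ne.symm h)] at key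
  have : ∫ u, (-1 : ℝ) * (u : Matrix (Fin N) (Fin N) ℝ) i j *
      (1 * (u : Matrix (Fin N) (Fin N) ℝ) k l) ∂μ
      = - ∫ u, (u : Matrix (Fin N) (Fin N) ℝ) i j * (u : Matrix (Fin N) (Fin N) ℝ) k l ∂μ := by
    rw [← integral_neg]
    congr 1
    funext u
    ring
  rw [this] at key
  linarith

lemma moment_transpose (i j k l : Fin N) :
    ∫ u, (u : Matrix (Fin N) (Fin N) ℝ) i j * (u : Matrix (Fin N) (Fin N) ℝ) k l ∂μ
      = ∫ u, (u : Matrix (Fin N) (Fin N) ℝ) j i * (u : Matrix (Fin N) (Fin N) ℝ) l k ∂μ := by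
  haveI : μ.IsInvInvariant := haar_inv_inv μ
  rw [← MeasureTheory.integral_inv_eq_self
    (fun u : Matrix.orthogonalGroup (Fin N) ℝ =>
      (u : Matrix (Fin N) (Fin N) ℝ) j i * (u : Matrix (Fin N) (Fin N) ℝ) l k) μ]
  simp only [inv_entry]

lemma moment_perm (σ : Equiv.Perm (Fin N)) (i j k l : Fin N) :
    ∫ u, (u : Matrix (Fin N) (Fin N) ℝ) i j * (u : Matrix (Fin N) (Fin N) ℝ) k l ∂μ
      = ∫ u, (u : Matrix (Fin N) (Fin N) ℝ) (σ i) j * (u : Matrix (Fin N) (Fin N) ℝ) (σ k) l ∂μ := by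
  have key := MeasureTheory.integral_mul_left_eq_self
    (μ := μ) (fun u : Matrix.orthogonalGroup (Fin N) ℝ =>
      (u : Matrix (Fin N) (Fin N) ℝ) i j * (u : Matrix (Fin N) (Fin N) ℝ) k l) (permO σ)
  simp only [permO_mul] at key
  exact key.symm

lemma moment_sq (i j : Fin N) :
    ∫ u, (u : Matrix (Fin N) (Fin N) ℝ) i j * (u : Matrix (Fin N) (Fin N) ℝ) i j ∂μ
      = 1 / (N : ℝ) := by
  have hall : ∀ k : Fin N,
      ∫ u, (u : Matrix (Fin N) (Fin N) ℝ) k j * (u : Matrix (Fin N) (Fin N) ℝ) k j ∂μ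
        = ∫ u, (u : Matrix (Fin N) (Fin N) ℝ) i j * (u : Matrix (Fin N) (Fin N) ℝ) i j ∂μ := by
    intro k
    have := moment_perm μ (Equiv.swap i k) i j i j
    rw [this, Equiv.swap_apply_left]
  have hsum : ∑ k : Fin N,
      (∫ u, (u : Matrix (Fin N) (Fin N) ℝ) k j * (u : Matrix (Fin N) (Fin N) ℝ) k j ∂μ) = 1 := by
    rw [← MeasureTheory.integral_finset_sum]
    · have hc : ∀ u : Matrix.orthogonalGroup (Fin N) ℝ,
          ∑ k : Fin N, (u : Matrix (Fin N) (Fin N) ℝ) k j * (u : Matrix (Fin N) (Fin N) ℝ) k j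
            = 1 := by
        intro u
        have hm := (Matrix.mem_orthogonalGroup_iff' (Fin N) ℝ).mp u.2
        have := congrArg (fun M : Matrix (Fin N) (Fin N) ℝ => M j j) hm
        simp only [Matrix.mul_apply, Matrix.star_apply, star_trivial, Matrix.one_apply_eq] at this
        simpa using this
      simp only [hc]
      simp
    · intro k _
      exact integrable_entry_mul μ k j k j
  rw [Finset.sum_congr rfl (fun k _ => hall k), Finset.sum_const, Finset.card_univ,
    Fintype.card_fin, nsmul_eq_mul] at hsum
  have hN : (N : ℝ) ≠ 0 := by
    have : 0 < N := Fin.pos i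
    positivity
  field_simp
  simp only [sq] at *
  linarith

lemma moment (i j k l : Fin N) :
    ∫ u, (u : Matrix (Fin N) (Fin N) ℝ) i j * (u : Matrix (Fin N) (Fin N) ℝ) k l ∂μ
      = if i = k ∧ j = l then 1 / (N : ℝ) else 0 := by
  by_cases hik : i = k
  · by_cases hjl : j = l
    · subst hik; subst hjl
      simp only [and_self, if_pos rfl]
      exact moment_sq μ i j
    · rw [if_neg (by tauto)]
      rw [moment_transpose]
      subst hik
      exact moment_row_ne μ j i l i hjl
  · rw [if_neg (by tauto)]
    exact moment_row_ne μ i j k l hik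

end moments

section main

variable (μ : Measure (Matrix.orthogonalGroup (Fin N) ℝ)) [μ.IsHaarMeasure]
  [IsProbabilityMeasure μ]

lemma integral_sum4 (f : Fin N → Fin N → Fin N → Fin N → Matrix.orthogonalGroup (Fin N) ℝ → ℝ)
    (hf : ∀ p s r q, Integrable (f p s r q) μ) :
    ∫ v, ∑ p, ∑ s, ∑ r, ∑ q, f p s r q v ∂μ
      = ∑ p, ∑ s, ∑ r, ∑ q, ∫ v, f p s r q v ∂μ := by
  rw [MeasureTheory.integral_finset_sum _ (fun p _ => integrable_finset_sum _
    (fun s _ => integrable_finset_sum _ (fun r _ => integrable_finset_sum _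
    (fun q _ => hf p s r q))))]
  refine Finset.sum_congr rfl fun p _ => ?_
  rw [MeasureTheory.integral_finset_sum _ (fun s _ => integrable_finset_sum _
    (fun r _ => integrable_finset_sum _ (fun q _ => hf p s r q)))]
  refine Finset.sum_congr rfl fun s _ => ?_
  rw [MeasureTheory.integral_finset_sum _ (fun r _ => integrable_finset_sum _
    (fun q _ => hf p s r q))]
  refine Finset.sum_congr rfl fun r _ => ?_
  rw [MeasureTheory.integral_finset_sum _ (fun q _ => hf p s r q)]

theorem trace_avg_CO' (hN : 1 ≤ N) :
    ∫ u, ∫ v, (((u * v * u⁻¹ * v⁻¹ : Matrix.orthogonalGroup (Fin N) ℝ) :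
        Matrix (Fin N) (Fin N) ℝ)).trace ∂μ ∂μ
      = 1 / (N : ℝ) := by
  have expand : ∀ u v : Matrix.orthogonalGroup (Fin N) ℝ,
      (((u * v * u⁻¹ * v⁻¹ : Matrix.orthogonalGroup (Fin N) ℝ) :
          Matrix (Fin N) (Fin N) ℝ)).trace
      = ∑ p, ∑ s, ∑ r, ∑ q,
          ((u : Matrix (Fin N) (Fin N) ℝ) p q * (u : Matrix (Fin N) (Fin N) ℝ) s r)
          * ((v : Matrix (Fin N) (Fin N) ℝ) q r * (v : Matrix (Fin N) (Fin N) ℝ) p s) := by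
    intro u v
    rw [Matrix.UnitaryGroup.mul_val, Matrix.UnitaryGroup.mul_val, Matrix.UnitaryGroup.mul_val,
      Matrix.UnitaryGroup.inv_val, Matrix.UnitaryGroup.inv_val]
    rw [Matrix.trace]
    simp only [Matrix.diag, Matrix.mul_apply, Finset.sum_mul, Matrix.star_apply, star_trivial]
    refine Finset.sum_congr rfl fun p _ => Finset.sum_congr rfl fun s _ =>
      Finset.sum_congr rfl fun r _ => Finset.sum_congr rfl fun q _ => by ring
  have hN' : (N : ℝ) ≠ 0 := by positivity
  have inner : ∀ u : Matrix.orthogonalGroup (Fin N) ℝ,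
      ∫ v, (((u * v * u⁻¹ * v⁻¹ : Matrix.orthogonalGroup (Fin N) ℝ) :
          Matrix (Fin N) (Fin N) ℝ)).trace ∂μ
      = ∑ p, ∑ s, ((u : Matrix (Fin N) (Fin N) ℝ) p p * (u : Matrix (Fin N) (Fin N) ℝ) s s)
          * (1 / (N : ℝ)) := by
    intro u
    simp only [expand u]
    rw [integral_sum4 μ _ (fun p s r q => ((integrable_entry_mul μ q r p s).const_mul _))]
    have hterm : ∀ p s r q : Fin N,
        ∫ v, ((u : Matrix (Fin N) (Fin N) ℝ) p q * (u : Matrix (Fin N) (Fin N) ℝ) s r)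
          * ((v : Matrix (Fin N) (Fin N) ℝ) q r * (v : Matrix (Fin N) (Fin N) ℝ) p s) ∂μ
        = ((u : Matrix (Fin N) (Fin N) ℝ) p q * (u : Matrix (Fin N) (Fin N) ℝ) s r)
          * (if q = p ∧ r = s then 1 / (N : ℝ) else 0) := by
      intro p s r q
      rw [MeasureTheory.integral_const_mul, moment μ q r p s]
    simp only [hterm]
    refine Finset.sum_congr rfl fun p _ => Finset.sum_congr rfl fun s _ => ?_
    simp only [mul_ite, mul_zero, ite_and]
    rw [Finset.sum_comm]
    simp [Finset.sum_ite_eq', Finset.sum_ite_eq]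
  simp only [inner]
  have hint2 : ∀ p s : Fin N, Integrable (fun u : Matrix.orthogonalGroup (Fin N) ℝ =>
      ((u : Matrix (Fin N) (Fin N) ℝ) p p * (u : Matrix (Fin N) (Fin N) ℝ) s s) * (1 / (N:ℝ))) μ :=
    fun p s => (integrable_entry_mul μ p p s s).mul_const _
  rw [MeasureTheory.integral_finset_sum _
    (fun p _ => integrable_finset_sum _ (fun s _ => hint2 p s))]
  have houter : ∀ p s : Fin N,
      ∫ u, ((u : Matrix (Fin N) (Fin N) ℝ) p p * (u : Matrix (Fin N) (Fin N) ℝ) s s)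
        * (1 / (N:ℝ)) ∂μ = (if p = s then 1/(N:ℝ) else 0) * (1 / (N:ℝ)) := by
    intro p s
    rw [MeasureTheory.integral_mul_const, moment μ p p s s]
    simp
  calc ∑ p, ∫ u, ∑ s, ((u : Matrix (Fin N) (Fin N) ℝ) p p
          * (u : Matrix (Fin N) (Fin N) ℝ) s s) * (1 / (N:ℝ)) ∂μ
      = ∑ p, ∑ s : Fin N, (if p = s then 1/(N:ℝ) else 0) * (1 / (N:ℝ)) := by
        refine Finset.sum_congr rfl fun p _ => ?_
        rw [MeasureTheory.integral_finset_sum _ (fun s _ => hint2 p s)]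
        exact Finset.sum_congr rfl fun s _ => houter p s
    _ = 1 / (N : ℝ) := by
        simp only [ite_mul, zero_mul, Finset.sum_ite_eq, Finset.mem_univ, if_true,
          Finset.sum_const, Finset.card_univ, Fintype.card_fin, nsmul_eq_mul]
        field_simp

end main

/-- ⟨Tr C⟩ over CO(N) equals 1/N. -/
theorem trace_avg_CO (N : ℕ) (hN : 1 ≤ N)
    (μ : Measure (Matrix.orthogonalGroup (Fin N) ℝ))
    [μ.IsHaarMeasure] [IsProbabilityMeasure μ] :
    ∫ u, ∫ v, (((u * v * u⁻¹ * v⁻¹ : Matrix.orthogonalGroup (Fin N) ℝ) :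
        Matrix (Fin N) (Fin N) ℝ)).trace ∂μ ∂μ
      = 1 / (N : ℝ) := trace_avg_CO' μ hN
end

section
/- Let N ≥ 1 and let 1 ≤ i, j ≤ N. Then the average over commutators in the orthogonal group satisfies ⟨C_{ij}⟩ = δ_{ij}/N²; that is, the entrywise average of the commutator C = u v u⁻¹ v⁻¹ over independent Haar-distributed u, v ∈ O(N) equals 1/N² times the N×N identity matrix. -/
set_option linter.unusedSectionVars false

open MeasureTheory Matrix

namespace EntryAvgCO

instance (N : ℕ) : BorelSpace (Matrix.orthogonalGroup (Fin N) ℝ) := Subtype.borelSpace _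

variable {N : ℕ}

/-- Entry of an orthogonal matrix. -/
def e (a b : Fin N) (u : Matrix.orthogonalGroup (Fin N) ℝ) : ℝ :=
  (u : Matrix (Fin N) (Fin N) ℝ) a b

lemma cont_e (a b : Fin N) : Continuous (e a b) :=
  continuous_subtype_val.matrix_elem a b

lemma row_orth (u : Matrix.orthogonalGroup (Fin N) ℝ) (a c : Fin N) :
    ∑ k, e a k u * e c k u = if a = c then 1 else 0 := by
  have h : (u : Matrix (Fin N) (Fin N) ℝ) * star (u : Matrix (Fin N) (Fin N) ℝ) = 1 := u.2.2
  have := congrArg (fun M => M a c) h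
  simpa [Matrix.mul_apply, Matrix.star_apply, Matrix.one_apply, e] using this

lemma col_orth (u : Matrix.orthogonalGroup (Fin N) ℝ) (b d : Fin N) :
    ∑ k, e k b u * e k d u = if b = d then 1 else 0 := by
  have h : star (u : Matrix (Fin N) (Fin N) ℝ) * (u : Matrix (Fin N) (Fin N) ℝ) = 1 := u.2.1
  have := congrArg (fun M => M b d) h
  simpa [Matrix.mul_apply, Matrix.star_apply, Matrix.one_apply, e] using this

lemma abs_e_le (a b : Fin N) (u : Matrix.orthogonalGroup (Fin N) ℝ) : |e a b u| ≤ 1 := by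
  have h2 : ∑ k, e a k u * e a k u = 1 := by simpa using row_orth u a a
  nlinarith [Finset.single_le_sum (f := fun k => e a k u * e a k u)
    (fun k _ => mul_self_nonneg _) (Finset.mem_univ b), abs_nonneg (e a b u),
    abs_mul_abs_self (e a b u)]

variable (μ : Measure (Matrix.orthogonalGroup (Fin N) ℝ)) [μ.IsHaarMeasure]
  [IsProbabilityMeasure μ]

lemma integrable_ee (a b c d : Fin N) : Integrable (fun u => e a b u * e c d u) μ := by
  refine Integrable.mono' (integrable_const 1) (((cont_e a b).mul (cont_e c d)).aestronglyMeasurable)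
    (Filter.Eventually.of_forall fun u => ?_)
  rw [norm_mul]
  calc ‖e a b u‖ * ‖e c d u‖ ≤ 1 * 1 :=
        mul_le_mul (abs_e_le a b u) (abs_e_le c d u) (norm_nonneg _) zero_le_one
    _ = 1 := by norm_num

lemma left_inv (g : Matrix.orthogonalGroup (Fin N) ℝ)
    (f : Matrix.orthogonalGroup (Fin N) ℝ → ℝ) :
    ∫ u, f (g * u) ∂μ = ∫ u, f u ∂μ :=
  integral_mul_left_eq_self f g

/-- The sign-flip diagonal matrix. -/
def signFlip (k : Fin N) : Matrix.orthogonalGroup (Fin N) ℝ :=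
  ⟨Matrix.diagonal (fun l => if l = k then (-1 : ℝ) else 1), by
    rw [Matrix.mem_orthogonalGroup_iff]
    ext x y
    simp only [Matrix.star_eq_conjTranspose, Matrix.diagonal_conjTranspose,
      Matrix.diagonal_mul_diagonal, Matrix.diagonal_apply, Matrix.one_apply, star_trivial]
    split_ifs <;> simp_all⟩

lemma e_signFlip_mul (k a b : Fin N) (u : Matrix.orthogonalGroup (Fin N) ℝ) :
    e a b (signFlip k * u) = (if a = k then (-1:ℝ) else 1) * e a b u := by
  simp [e, signFlip, Matrix.diagonal_mul]

/-- The permutation matrix of σ, as an orthogonal matrix. -/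
def permOG (σ : Equiv.Perm (Fin N)) : Matrix.orthogonalGroup (Fin N) ℝ :=
  ⟨Matrix.of (fun x y => if σ x = y then (1 : ℝ) else 0), by
    rw [Matrix.mem_orthogonalGroup_iff]
    ext x y
    rw [Matrix.mul_apply]
    simp only [Matrix.star_eq_conjTranspose, Matrix.conjTranspose_apply, Matrix.of_apply,
      star_trivial, ite_mul, one_mul, zero_mul, Finset.sum_ite_eq, Finset.mem_univ, if_true]
    simp [Matrix.one_apply, σ.injective.eq_iff, eq_comm]⟩

lemma e_permOG_mul (σ : Equiv.Perm (Fin N)) (a b : Fin N)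
    (u : Matrix.orthogonalGroup (Fin N) ℝ) :
    e a b (permOG σ * u) = e (σ a) b u := by
  simp only [e, Matrix.UnitaryGroup.mul_val]
  rw [Matrix.mul_apply]
  simp [permOG]

lemma moment2 (a b c d : Fin N) :
    ∫ u, e a b u * e c d u ∂μ = if a = c ∧ b = d then ((N : ℝ))⁻¹ else 0 := by
  by_cases hac : a = c
  · subst hac
    -- S is independent of the row index
    have hrow : ∀ a' : Fin N, ∫ u, e a' b u * e a' d u ∂μ = ∫ u, e a b u * e a d u ∂μ := by
      intro a'
      have := left_inv μ (permOG (Equiv.swap a a')) (fun u => e a b u * e a d u)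
      simp only [e_permOG_mul, Equiv.swap_apply_left] at this
      exact this
    have hsum : ∑ a' : Fin N, ∫ u, e a' b u * e a' d u ∂μ = if b = d then 1 else 0 := by
      rw [← integral_finset_sum _ (fun a' _ => integrable_ee μ a' b a' d)]
      simp_rw [col_orth]
      simp
    rw [Finset.sum_congr rfl (fun a' _ => hrow a')] at hsum
    simp only [Finset.sum_const, Finset.card_univ, Fintype.card_fin, nsmul_eq_mul] at hsum
    have hN : (0:ℝ) < N := by
      have : 0 < N := a.pos
      exact_mod_cast this
    have : ∫ u, e a b u * e a d u ∂μ = (if b = d then 1 else 0) / N := by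
      field_simp at hsum ⊢
      linarith [hsum]
    rw [this]
    by_cases hbd : b = d <;> simp [hbd, one_div]
  · -- sign flip on row a kills the integral
    have h := left_inv μ (signFlip a) (fun u => e a b u * e c d u)
    simp only [e_signFlip_mul, if_pos rfl, if_neg (Ne.symm hac), ite_true, one_mul,
      neg_one_mul, neg_mul, integral_neg] at h
    simp only [if_neg (by simp [hac] : ¬(a = c ∧ b = d))]
    linarith

lemma expand (u v : Matrix.orthogonalGroup (Fin N) ℝ) (i j : Fin N) :
    ((u * v * u⁻¹ * v⁻¹ : Matrix.orthogonalGroup (Fin N) ℝ) :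
        Matrix (Fin N) (Fin N) ℝ) i j =
      ∑ c : Fin N, ∑ b : Fin N, ∑ a : Fin N,
        (e i a u * e c b u) * (e a b v * e j c v) := by
  show ((u : Matrix (Fin N) (Fin N) ℝ) * v * star (u : Matrix (Fin N) (Fin N) ℝ)
      * star (v : Matrix (Fin N) (Fin N) ℝ)) i j = _
  simp only [Matrix.mul_apply, Matrix.star_apply, star_trivial, Finset.sum_mul, e]
  exact Finset.sum_congr rfl fun c _ => Finset.sum_congr rfl fun b _ =>
    Finset.sum_congr rfl fun a _ => by ring

lemma inner_int (u : Matrix.orthogonalGroup (Fin N) ℝ) (i j : Fin N) :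
    ∫ v, ((u * v * u⁻¹ * v⁻¹ : Matrix.orthogonalGroup (Fin N) ℝ) :
        Matrix (Fin N) (Fin N) ℝ) i j ∂μ
      = ∑ c : Fin N, (e i j u * e c c u) * ((N : ℝ))⁻¹ := by
  simp_rw [expand]
  rw [integral_finset_sum _ (fun c _ => integrable_finset_sum _ (fun b _ =>
    integrable_finset_sum _ (fun a _ => (integrable_ee μ a b j c).const_mul _)))]
  have h1 : ∀ c ∈ Finset.univ, (∫ v, ∑ b : Fin N, ∑ a : Fin N,
      (e i a u * e c b u) * (e a b v * e j c v) ∂μ)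
      = ∑ b : Fin N, ∑ a : Fin N, (e i a u * e c b u)
          * ∫ v, e a b v * e j c v ∂μ := by
    intro c _
    rw [integral_finset_sum _ (fun b _ =>
      integrable_finset_sum _ (fun a _ => (integrable_ee μ a b j c).const_mul _))]
    refine Finset.sum_congr rfl fun b _ => ?_
    rw [integral_finset_sum _ (fun a _ => (integrable_ee μ a b j c).const_mul _)]
    exact Finset.sum_congr rfl fun a _ => integral_const_mul _ _
  rw [Finset.sum_congr rfl h1]
  simp_rw [moment2]
  simp [mul_ite, mul_zero, ite_and, Finset.sum_ite_eq', Finset.sum_ite_eq]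

end EntryAvgCO

open EntryAvgCO in
/-- ⟨C_{ij}⟩ over CO(N) equals δ_{ij}/N². -/
theorem entry_avg_CO (N : ℕ) (hN : 1 ≤ N) (i j : Fin N)
    (μ : Measure (Matrix.orthogonalGroup (Fin N) ℝ))
    [μ.IsHaarMeasure] [IsProbabilityMeasure μ] :
    ∫ u, ∫ v, ((u * v * u⁻¹ * v⁻¹ : Matrix.orthogonalGroup (Fin N) ℝ) :
        Matrix (Fin N) (Fin N) ℝ) i j ∂μ ∂μ
      = if i = j then 1 / (N : ℝ) ^ 2 else 0 := by
  have hNpos : (0:ℝ) < N := by exact_mod_cast hN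
  simp_rw [inner_int μ]
  rw [integral_finset_sum _ (fun c _ => (integrable_ee μ i j c c).mul_const _)]
  simp_rw [integral_mul_const, moment2 μ]
  by_cases hij : i = j
  · subst hij
    simp only [and_self, ite_mul, zero_mul]
    rw [Finset.sum_ite_eq Finset.univ i (fun _ => ((N:ℝ))⁻¹ * ((N:ℝ))⁻¹)]
    simp [sq, mul_inv, one_div]
  · have : ∀ c : Fin N, ¬(i = c ∧ j = c) := by
      rintro c ⟨rfl, rfl⟩; exact hij rfl
    simp [this, hij]
end
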